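/- Let n = x₁x₂⋯x_j where x₁,…,x_j are pairwise relatively prime positive integers. Then there is a permutation of the rows and columns of the n×n DFT matrix DFT_n that equals the Kronecker product DFT_{x₁} ⊗ ⋯ ⊗ DFT_{x_j}. -/

import Mathlib

open Matrix

/-- The `m × m` DFT matrix, with `(x,y)` entry `e^{2πi·xy/m}`. -/
noncomputable def DFTN (m : ℕ) : Matrix (Fin m) (Fin m) ℂ :=
  Matrix.of fun x y =>
    Complex.exp (2 * Real.pi * Complex.I * (x : ℕ) * (y : ℕ) / m)

/-- `ZMod m` is equivalent to `Fin m` for `m ≠ 0`. -/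
noncomputable def zmodFin (m : ℕ) [NeZero m] : ZMod m ≃ Fin m where
  toFun z := ⟨z.val, z.val_lt⟩
  invFun k := ((k : ℕ) : ZMod m)
  left_inv z := ZMod.natCast_rightInverse z
  right_inv k := by ext; simp [ZMod.val_natCast_of_lt k.isLt]

lemma exp_congr_mod (m : ℕ) (hm : m ≠ 0) {p q : ℕ} (h : p ≡ q [MOD m]) :
    Complex.exp (2 * Real.pi * Complex.I * p / m)
      = Complex.exp (2 * Real.pi * Complex.I * q / m) := by
  obtain ⟨k, hk⟩ := h.dvd
  have hq : (q : ℂ) = p + m * k := by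
    have : (q : ℤ) = p + m * k := by linarith [hk]
    exact_mod_cast congrArg (Int.cast : ℤ → ℂ) this
  have hm' : (m : ℂ) ≠ 0 := Nat.cast_ne_zero.mpr hm
  rw [hq, show 2 * (Real.pi:ℂ) * Complex.I * ((p:ℂ) + m * k) / m
      = 2 * Real.pi * Complex.I * p / m + k * (2 * Real.pi * Complex.I) by
    field_simp]
  rw [Complex.exp_add, Complex.exp_int_mul_two_pi_mul_I, mul_one]

theorem DFT_coprime_factorization (j n : ℕ) (x : Fin j → ℕ)
    (hpos : ∀ i, 0 < x i)
    (hcop : ∀ i i', i ≠ i' → Nat.Coprime (x i) (x i'))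
    (hn : n = ∏ i, x i) :
    ∃ eR eC : (∀ i, Fin (x i)) ≃ Fin n,
      ∀ a b : ∀ i, Fin (x i),
        DFTN n (eR a) (eC b) = ∏ i, DFTN (x i) (a i) (b i) := by
  subst hn
  have hNpos : 0 < ∏ i, x i := Finset.prod_pos fun i _ => hpos i
  haveI : NeZero (∏ i, x i) := ⟨hNpos.ne'⟩
  have instX : ∀ i, NeZero (x i) := fun i => ⟨(hpos i).ne'⟩
  have hcop' : Pairwise (Function.onFun Nat.Coprime x) := fun i i' h => hcop i i' h
  let φ : ZMod (∏ i, x i) ≃+* ∀ i, ZMod (x i) := ZMod.prodEquivPi x hcop'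
  let c : Fin j → ℕ := fun i => ∏ i' ∈ Finset.univ.erase i, x i'
  have hc : ∀ i, x i * c i = ∏ i, x i := fun i =>
    Finset.mul_prod_erase _ _ (Finset.mem_univ i)
  have hcpos : ∀ i, 0 < c i := fun i => Finset.prod_pos fun i' _ => hpos i'
  have hccop : ∀ i, Nat.Coprime (c i) (x i) := fun i =>
    Nat.Coprime.prod_left fun i' hi' => hcop i' i (Finset.ne_of_mem_erase hi')
  let u : ∀ i, (ZMod (x i))ˣ := fun i => ZMod.unitOfCoprime (c i) (hccop i)
  have hdvd : ∀ k : Fin j, x k ∣ ∏ i, x i := fun k =>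
    Finset.dvd_prod_of_mem x (Finset.mem_univ k)
  -- component formula for φ
  have hφ : ∀ (r : ZMod (∏ i, x i)) (k : Fin j),
      φ r k = ZMod.castHom (hdvd k) (ZMod (x k)) r := by
    intro r k
    have h := RingHom.ext_zmod
      ((Pi.evalRingHom (fun i => ZMod (x i)) k).comp
        (φ : ZMod (∏ i, x i) →+* ∀ i, ZMod (x i)))
      (ZMod.castHom (hdvd k) (ZMod (x k)))
    exact DFunLike.congr_fun h r
  have key : ∀ (A : ∀ i, ZMod (x i)) (k : Fin j),
      (((φ.symm A).val : ℕ) : ZMod (x k)) = A k := by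
    intro A k
    have h1 : (((φ.symm A).val : ℕ) : ZMod (x k))
        = ZMod.castHom (hdvd k) (ZMod (x k)) (φ.symm A) := by
      rw [ZMod.castHom_apply]
      calc (((φ.symm A).val : ℕ) : ZMod (x k))
          = ZMod.cast ((((φ.symm A).val : ℕ)) : ZMod (∏ i, x i)) :=
            (ZMod.cast_natCast (hdvd k) _).symm
        _ = ZMod.cast (φ.symm A) := by
            rw [ZMod.natCast_rightInverse (φ.symm A)]
    rw [h1, ← hφ, RingEquiv.apply_symm_apply]
  -- definitions of the permutations
  let eR : (∀ i, Fin (x i)) ≃ Fin (∏ i, x i) :=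
    (Equiv.piCongrRight fun i => (@zmodFin (x i) (instX i)).symm).trans
      (φ.toEquiv.symm.trans (zmodFin _))
  let eC : (∀ i, Fin (x i)) ≃ Fin (∏ i, x i) :=
    (Equiv.piCongrRight fun i =>
        ((@zmodFin (x i) (instX i)).symm.trans (Units.mulLeft (u i)))).trans
      (φ.toEquiv.symm.trans (zmodFin _))
  refine ⟨eR, eC, fun a b => ?_⟩
  set A : ∀ i, ZMod (x i) := fun i => ((a i : ℕ) : ZMod (x i)) with hA
  set B : ∀ i, ZMod (x i) := fun i => (u i : ZMod (x i)) * ((b i : ℕ) : ZMod (x i)) with hB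
  have hBk : ∀ k, B k = ((c k * (b k : ℕ) : ℕ) : ZMod (x k)) := by
    intro k
    rw [hB]
    simp only [u, ZMod.coe_unitOfCoprime]
    push_cast
    ring
  have hRa : ((eR a : Fin (∏ i, x i)) : ℕ) = (φ.symm A).val := rfl
  have hCb : ((eC b : Fin (∏ i, x i)) : ℕ) = (φ.symm B).val := rfl
  -- the central congruence
  have main : (φ.symm A).val * (φ.symm B).val
      ≡ ∑ i, (a i : ℕ) * (b i : ℕ) * c i [MOD ∏ i, x i] := by
    rw [← ZMod.natCast_eq_natCast_iff]
    apply φ.injective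
    rw [map_natCast, map_natCast]
    funext k
    simp only [Pi.natCast_apply]
    push_cast
    rw [key A k, key B k, hBk k]
    rw [Finset.sum_eq_single k]
    · push_cast
      rw [hA]
      ring
    · intro i _ hik
      have : ((c i : ℕ) : ZMod (x k)) = 0 := by
        rw [ZMod.natCast_eq_zero_iff]
        exact Finset.dvd_prod_of_mem x (Finset.mem_erase.mpr ⟨hik.symm, Finset.mem_univ k⟩)
      rw [this, mul_zero]
    · intro h
      exact absurd (Finset.mem_univ k) h
  -- analytic computation
  simp only [DFTN, Matrix.of_apply]
  rw [hRa, hCb]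
  have step1 : (2 * (Real.pi:ℂ) * Complex.I * ((φ.symm A).val : ℕ) * ((φ.symm B).val : ℕ)
      / (∏ i, x i : ℕ))
      = 2 * Real.pi * Complex.I * (((φ.symm A).val * (φ.symm B).val : ℕ) : ℂ)
        / (∏ i, x i : ℕ) := by
    push_cast
    ring
  rw [step1, exp_congr_mod _ hNpos.ne' main]
  have step2 : (2 * (Real.pi:ℂ) * Complex.I * ((∑ i, (a i : ℕ) * (b i : ℕ) * c i : ℕ) : ℂ)
      / (∏ i, x i : ℕ))
      = ∑ i, 2 * (Real.pi:ℂ) * Complex.I * ((a i : ℕ) : ℂ) * ((b i : ℕ) : ℂ) / ((x i : ℕ) : ℂ) := by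
    push_cast
    rw [Finset.mul_sum, Finset.sum_div]
    refine Finset.sum_congr rfl fun i _ => ?_
    have hxne : ((x i : ℕ) : ℂ) ≠ 0 := Nat.cast_ne_zero.mpr (hpos i).ne'
    have hcne : ((c i : ℕ) : ℂ) ≠ 0 := Nat.cast_ne_zero.mpr (hcpos i).ne'
    have hN : ((∏ i, x i : ℕ) : ℂ) = (x i : ℂ) * (c i : ℂ) := by
      rw [← hc i]; push_cast; ring
    rw [← Nat.cast_prod, hN]
    field_simp
  rw [step2, Complex.exp_sum]
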